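/- For the independence copula C(u,v) = uv, the asymptotic variance of the TCTE estimator equals σ²_C(v) = 1/(12v) − 1/12 for every v ∈ (0,1]. That is, (2/v²) ∫₀¹ ∫₀^w { C(u,v)(1−C(w,v)) + ∂₂C(u,v)∂₂C(w,v)·v(1−v) + ∂₁C(u,v)∂₁C(w,v)·u(1−w) − ∂₂C(u,v)C(w,v)(1−v) − ∂₂C(w,v)C(u,v)(1−v) − ∂₁C(u,v)[C(u,v) − C(w,v)u] − ∂₁C(w,v)C(u,v)(1−w) + ∂₂C(u,v)∂₁C(w,v)(C(w,v) − vw) + ∂₂C(w,v)∂₁C(u,v)(C(u,v) − vu) } du dw = 1/(12v) − 1/12, where for C(u,v) = uv one has ∂₁C(u,v) = v and ∂₂C(u,v) = u. In particular σ²_C(v) is decreasing in v and σ²_C(1) = 0. -/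

import Mathlib

open MeasureTheory Filter Set

/-- The asymptotic variance `σ²_C(v)` of the TCTE estimator (Theorem 3.2), for a copula
`D` with partial derivatives `D1 = ∂₁D` and `D2 = ∂₂D`. -/
noncomputable def sigmaSq (D D1 D2 : ℝ → ℝ → ℝ) (v : ℝ) : ℝ :=
  (2 / v^2) * ∫ w in (0:ℝ)..1, ∫ u in (0:ℝ)..w,
    (D u v * (1 - D w v) + D2 u v * D2 w v * (v * (1 - v))
      + D1 u v * D1 w v * (u * (1 - w))
      - D2 u v * D w v * (1 - v) - D2 w v * D u v * (1 - v)
      - D1 u v * (D u v - D w v * u) - D1 w v * D u v * (1 - w)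
      + D2 u v * D1 w v * (D w v - v * w) + D2 w v * D1 u v * (D u v - v * u))

lemma sigmaSq_indep_val (v : ℝ) :
    sigmaSq (fun u v' => u * v') (fun _ v' => v') (fun u _ => u) v
      = 2 / v ^ 2 * (v * (1 - v) / 24) := by
  unfold sigmaSq
  congr 1
  have h1 : ∀ w : ℝ, (∫ u in (0:ℝ)..w,
      (u * v * (1 - w * v) + u * w * (v * (1 - v)) + v * v * (u * (1 - w))
        - u * (w * v) * (1 - v) - w * (u * v) * (1 - v)
        - v * (u * v - w * v * u) - v * (u * v) * (1 - w)
        + u * v * (w * v - v * w) + w * v * (u * v - v * u)))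
      = v * (1 - v) * (w ^ 2 / 2 - w ^ 3 / 2) := by
    intro w
    have heq : ∀ u : ℝ,
        (u * v * (1 - w * v) + u * w * (v * (1 - v)) + v * v * (u * (1 - w))
        - u * (w * v) * (1 - v) - w * (u * v) * (1 - v)
        - v * (u * v - w * v * u) - v * (u * v) * (1 - w)
        + u * v * (w * v - v * w) + w * v * (u * v - v * u))
        = (v * (1 - v) * (1 - w)) * u := by
      intro u; ring
    simp_rw [heq]
    open intervalIntegral in rw [intervalIntegral.integral_const_mul, integral_id]
    ring
  simp_rw [h1]
  open intervalIntegral in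
  rw [intervalIntegral.integral_const_mul,
    integral_sub (((continuous_pow 2).div_const 2).intervalIntegrable 0 1)
      (((continuous_pow 3).div_const 2).intervalIntegrable 0 1),
    intervalIntegral.integral_div, intervalIntegral.integral_div, integral_pow, integral_pow]
  norm_num
  ring

/-- For the independence copula `C(u,v) = uv` (so `∂₁C(u,v) = v` and
`∂₂C(u,v) = u`), the asymptotic variance equals `σ²_C(v) = 1/(12v) − 1/12` for every
`v ∈ (0,1]`; in particular it is decreasing in `v` and vanishes at `v = 1`. -/
theorem sigmaSq_independence_copula :
    (∀ v ∈ Set.Ioc (0:ℝ) 1,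
      sigmaSq (fun u v' => u * v') (fun _ v' => v') (fun u _ => u) v
        = 1/(12*v) - 1/12) ∧
    (∀ v₁ ∈ Set.Ioc (0:ℝ) 1, ∀ v₂ ∈ Set.Ioc (0:ℝ) 1, v₁ < v₂ →
      sigmaSq (fun u v' => u * v') (fun _ v' => v') (fun u _ => u) v₂
        < sigmaSq (fun u v' => u * v') (fun _ v' => v') (fun u _ => u) v₁) ∧
    sigmaSq (fun u v' => u * v') (fun _ v' => v') (fun u _ => u) 1 = 0 := by
  have hval : ∀ v ∈ Set.Ioc (0:ℝ) 1,
      sigmaSq (fun u v' => u * v') (fun _ v' => v') (fun u _ => u) v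
        = 1/(12*v) - 1/12 := by
    intro v hv
    rw [sigmaSq_indep_val]
    have hv0 : v ≠ 0 := ne_of_gt hv.1
    field_simp
    ring
  refine ⟨hval, ?_, ?_⟩
  · intro v₁ hv₁ v₂ hv₂ h12
    rw [hval v₁ hv₁, hval v₂ hv₂]
    have : 1/(12*v₂) < 1/(12*v₁) := by
      apply one_div_lt_one_div_of_lt
      · have := hv₁.1; positivity
      · linarith [hv₁.1]
    linarith
  · rw [sigmaSq_indep_val]; norm_num
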